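/- The uncentered efficient influence function is unbiased for θ: with all nuisance functions evaluated at their true values, E[D_P(O)] = θ, where θ = Σ_{w,z,m} b(a',z,m,w) q(z|a',w) p(m|a*,w) p(w) and D_P(o) = 1{a=a'}/g(a'|w) · c(a',z,m,w) · (y − b(a',z,m,w)) + 1{a=a'}/g(a'|w) · (u(z,a',w) − Σ_z u(z,a',w) q(z|a',w)) + 1{a=a*}/g(a*|w) · (Σ_z b(a',z,m,w) q(z|a',w) − v(a*,w)) + v(a*,w). -/

import Mathlib

open Finset
open scoped Classical

/-- Probability of the event `S` under the pmf `P` on a finite outcome space. -/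
noncomputable def pr {Ω : Type*} [Fintype Ω] (P : Ω → ℝ) (S : Ω → Prop) : ℝ :=
  ∑ ω, if S ω then P ω else 0

/-- Conditional probability `P(S | T)`. -/
noncomputable def cpr {Ω : Type*} [Fintype Ω] (P : Ω → ℝ) (S T : Ω → Prop) : ℝ :=
  pr P (fun ω => S ω ∧ T ω) / pr P T

/-- Conditional expectation `E[f | T]` (pmf-weighted average). -/
noncomputable def cex {Ω : Type*} [Fintype Ω] (P : Ω → ℝ) (f : Ω → ℝ)
    (T : Ω → Prop) : ℝ :=
  (∑ ω, if T ω then P ω * f ω else 0) / pr P T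

section Helpers
variable {Ω : Type*} [Fintype Ω]

/-- auxiliary: indicator-weighted sum of an arbitrary weight function. -/
noncomputable def prf (h : Ω → ℝ) (S : Ω → Prop) : ℝ :=
  ∑ ω, if S ω then h ω else 0

lemma prf_eq_pr (P : Ω → ℝ) (S : Ω → Prop) : prf P S = pr P S := rfl

lemma pr_congr' (P : Ω → ℝ) {S T : Ω → Prop} (h : ∀ ω, S ω ↔ T ω) :
    pr P S = pr P T := by
  unfold pr
  exact Finset.sum_congr rfl fun ω _ => by simp [h ω]

lemma pr_le' (P : Ω → ℝ) (hP : ∀ ω, 0 ≤ P ω) {S T : Ω → Prop}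
    (h : ∀ ω, S ω → T ω) : pr P S ≤ pr P T := by
  unfold pr
  refine Finset.sum_le_sum fun ω _ => ?_
  by_cases hs : S ω
  · simp [hs, h ω hs]
  · simp only [hs, if_false]
    split_ifs
    · exact hP ω
    · exact le_refl 0

lemma cpr_mul (P : Ω → ℝ) (S T : Ω → Prop) (h : pr P T ≠ 0) :
    cpr P S T * pr P T = pr P (fun ω => S ω ∧ T ω) := by
  unfold cpr; field_simp

lemma cex_mul (P : Ω → ℝ) (f : Ω → ℝ) (T : Ω → Prop) (h : pr P T ≠ 0) :
    cex P f T * pr P T = ∑ ω, if T ω then P ω * f ω else 0 := by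
  unfold cex; field_simp

lemma fiber1 {β : Type*} [Fintype β] (φ : Ω → β) (h : Ω → ℝ) (f : β → ℝ) :
    ∑ ω, h ω * f (φ ω) = ∑ b, f b * prf h (fun ω => φ ω = b) := by
  unfold prf
  have key : ∀ b, f b * ∑ ω, (if φ ω = b then h ω else 0)
      = ∑ ω, (if φ ω = b then f b * h ω else 0) := by
    intro b; rw [Finset.mul_sum]
    exact Finset.sum_congr rfl fun ω _ => by split_ifs <;> simp
  simp_rw [key]
  rw [Finset.sum_comm]
  refine Finset.sum_congr rfl fun ω _ => ?_
  rw [Finset.sum_ite_eq Finset.univ (φ ω) (fun b => f b * h ω)]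
  simp [mul_comm]

lemma fiber2 {𝒜 β γ : Type*} [Fintype β] [Fintype γ]
    (A : Ω → 𝒜) (a : 𝒜) (φ : Ω → β) (ψ : Ω → γ) (h : Ω → ℝ) (f : β → γ → ℝ) :
    ∑ ω, (if A ω = a then h ω else 0) * f (φ ω) (ψ ω)
      = ∑ x, ∑ y, f x y * prf h (fun ω => A ω = a ∧ φ ω = x ∧ ψ ω = y) := by
  unfold prf
  have key : ∀ ω, (if A ω = a then h ω else 0) * f (φ ω) (ψ ω)
      = ∑ x, ∑ y, if A ω = a ∧ φ ω = x ∧ ψ ω = y then f x y * h ω else 0 := by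
    intro ω
    by_cases hA : A ω = a
    · simp [hA, ite_and, mul_comm]
    · simp [hA]
  simp_rw [key]
  rw [Finset.sum_comm]
  refine Finset.sum_congr rfl fun x _ => ?_
  rw [Finset.sum_comm]
  refine Finset.sum_congr rfl fun y _ => ?_
  rw [Finset.mul_sum]
  exact Finset.sum_congr rfl fun ω _ => by split_ifs <;> simp

lemma fiber3 {𝒜 β γ δ : Type*} [Fintype β] [Fintype γ] [Fintype δ]
    (A : Ω → 𝒜) (a : 𝒜) (φ : Ω → β) (ψ : Ω → γ) (χ : Ω → δ)
    (h : Ω → ℝ) (f : β → γ → δ → ℝ) :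
    ∑ ω, (if A ω = a then h ω else 0) * f (φ ω) (ψ ω) (χ ω)
      = ∑ x, ∑ y, ∑ u, f x y u *
          prf h (fun ω => A ω = a ∧ φ ω = x ∧ ψ ω = y ∧ χ ω = u) := by
  unfold prf
  have key : ∀ ω, (if A ω = a then h ω else 0) * f (φ ω) (ψ ω) (χ ω)
      = ∑ x, ∑ y, ∑ u,
          if A ω = a ∧ φ ω = x ∧ ψ ω = y ∧ χ ω = u then f x y u * h ω else 0 := by
    intro ω
    by_cases hA : A ω = a
    · simp [hA, ite_and, mul_comm]
    · simp [hA]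
  simp_rw [key]
  rw [Finset.sum_comm]
  refine Finset.sum_congr rfl fun x _ => ?_
  rw [Finset.sum_comm]
  refine Finset.sum_congr rfl fun y _ => ?_
  rw [Finset.sum_comm]
  refine Finset.sum_congr rfl fun u _ => ?_
  rw [Finset.mul_sum]
  exact Finset.sum_congr rfl fun ω _ => by split_ifs <;> simp

end Helpers

section EIF

variable {Ω 𝒲 𝒜 𝒵 ℳ : Type*} [Fintype Ω] [Fintype 𝒲] [Fintype 𝒵] [Fintype ℳ]
variable (P : Ω → ℝ) (W : Ω → 𝒲) (A : Ω → 𝒜) (Z : Ω → 𝒵) (M : Ω → ℳ) (Y : Ω → ℝ)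

/-- `g(a|w) = P(A=a|W=w)`. -/
noncomputable def gg (a : 𝒜) (w : 𝒲) : ℝ :=
  cpr P (fun ω => A ω = a) (fun ω => W ω = w)

/-- `q(z|a,w) = P(Z=z|A=a,W=w)`. -/
noncomputable def qq (z : 𝒵) (a : 𝒜) (w : 𝒲) : ℝ :=
  cpr P (fun ω => Z ω = z) (fun ω => A ω = a ∧ W ω = w)

/-- `p(m|a,w) = P(M=m|A=a,W=w)`. -/
noncomputable def pM (m : ℳ) (a : 𝒜) (w : 𝒲) : ℝ :=
  cpr P (fun ω => M ω = m) (fun ω => A ω = a ∧ W ω = w)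

/-- `p(m|a,z,w) = P(M=m|A=a,Z=z,W=w)`. -/
noncomputable def pMZ (m : ℳ) (a : 𝒜) (z : 𝒵) (w : 𝒲) : ℝ :=
  cpr P (fun ω => M ω = m) (fun ω => A ω = a ∧ Z ω = z ∧ W ω = w)

/-- `b(a,z,m,w) = E[Y|A=a,Z=z,M=m,W=w]`. -/
noncomputable def bb (a : 𝒜) (z : 𝒵) (m : ℳ) (w : 𝒲) : ℝ :=
  cex P Y (fun ω => A ω = a ∧ Z ω = z ∧ M ω = m ∧ W ω = w)

/-- `c(a,z,m,w) = p(m|a*,w)/p(m|a,z,w)`. -/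
noncomputable def cc (astar a : 𝒜) (z : 𝒵) (m : ℳ) (w : 𝒲) : ℝ :=
  pM P W A M m astar w / pMZ P W A Z M m a z w

/-- `u(z,a,w) = Σ_m b(a,z,m,w) p(m|a*,w)`. -/
noncomputable def uu (astar : 𝒜) (z : 𝒵) (a : 𝒜) (w : 𝒲) : ℝ :=
  ∑ m, bb P W A Z M Y a z m w * pM P W A M m astar w

/-- `v(a,w) = Σ_{m,z} b(a',z,m,w) q(z|a',w) p(m|a,w)`. -/
noncomputable def vv (a' : 𝒜) (a : 𝒜) (w : 𝒲) : ℝ :=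
  ∑ m, ∑ z, bb P W A Z M Y a' z m w * qq P W A Z z a' w * pM P W A M m a w

/-- The target parameter `θ = Σ_{w,z,m} b(a',z,m,w) q(z|a',w) p(m|a*,w) p(w)`. -/
noncomputable def θparam (a' astar : 𝒜) : ℝ :=
  ∑ w, ∑ z, ∑ m, bb P W A Z M Y a' z m w * qq P W A Z z a' w *
    pM P W A M m astar w * pr P (fun ω => W ω = w)

/-- The uncentered EIF `D_P(o)` with all nuisances at their true values. -/
noncomputable def Dfun (a' astar : 𝒜) (ω : Ω) : ℝ :=
  (if A ω = a' then (1 : ℝ) else 0) / gg P W A a' (W ω) *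
      cc P W A Z M astar a' (Z ω) (M ω) (W ω) *
      (Y ω - bb P W A Z M Y a' (Z ω) (M ω) (W ω)) +
    (if A ω = a' then (1 : ℝ) else 0) / gg P W A a' (W ω) *
      (uu P W A Z M Y astar (Z ω) a' (W ω) -
        ∑ z, uu P W A Z M Y astar z a' (W ω) * qq P W A Z z a' (W ω)) +
    (if A ω = astar then (1 : ℝ) else 0) / gg P W A astar (W ω) *
      ((∑ z, bb P W A Z M Y a' z (M ω) (W ω) * qq P W A Z z a' (W ω)) -
        vv P W A Z M Y a' astar (W ω)) +
    vv P W A Z M Y a' astar (W ω)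

/-- The uncentered efficient influence function is unbiased for θ:
with all nuisance functions evaluated at their true values, `E[D_P(O)] = θ`. -/
theorem eif_unbiased (hP : ∀ ω, 0 ≤ P ω) (hsum : ∑ ω, P ω = 1)
    (hpos : ∀ w a z m,
      0 < pr P (fun ω => W ω = w ∧ A ω = a ∧ Z ω = z ∧ M ω = m))
    (a' astar : 𝒜) :
    ∑ ω, P ω * Dfun P W A Z M Y a' astar ω = θparam P W A Z M Y a' astar := by
  classical
  have hΩ : Nonempty Ω := by
    by_contra hne
    rw [not_nonempty_iff] at hne
    rw [Finset.univ_eq_empty, Finset.sum_empty] at hsum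
    exact one_ne_zero hsum.symm
  obtain ⟨ω₀⟩ := hΩ
  -- positivity facts
  have hprW : ∀ w, 0 < pr P (fun ω => W ω = w) := by
    intro w
    refine lt_of_lt_of_le (hpos w (A ω₀) (Z ω₀) (M ω₀)) (pr_le' P hP ?_)
    exact fun ω h => h.1
  have hprAW : ∀ a w, 0 < pr P (fun ω => A ω = a ∧ W ω = w) := by
    intro a w
    refine lt_of_lt_of_le (hpos w a (Z ω₀) (M ω₀)) (pr_le' P hP ?_)
    exact fun ω h => ⟨h.2.1, h.1⟩
  have hprE4 : ∀ a z m w,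
      0 < pr P (fun ω => A ω = a ∧ Z ω = z ∧ M ω = m ∧ W ω = w) := by
    intro a z m w
    rw [pr_congr' P (T := fun ω => W ω = w ∧ A ω = a ∧ Z ω = z ∧ M ω = m)
      (fun ω => by tauto)]
    exact hpos w a z m
  have hggpos : ∀ a w, 0 < gg P W A a w := by
    intro a w
    unfold gg cpr
    apply div_pos _ (hprW w)
    exact hprAW a w
  -- product identities
  have hgg : ∀ a w, gg P W A a w * pr P (fun ω => W ω = w)
      = pr P (fun ω => A ω = a ∧ W ω = w) := by
    intro a w
    exact cpr_mul P _ _ (hprW w).ne'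
  have hAZW : ∀ a z w, pr P (fun ω => A ω = a ∧ Z ω = z ∧ W ω = w)
      = qq P W A Z z a w * (gg P W A a w * pr P (fun ω => W ω = w)) := by
    intro a z w
    rw [hgg a w,
      pr_congr' P (S := fun ω => A ω = a ∧ Z ω = z ∧ W ω = w)
        (T := fun ω => Z ω = z ∧ (A ω = a ∧ W ω = w)) (fun ω => by tauto)]
    exact (cpr_mul P (fun ω => Z ω = z) (fun ω => A ω = a ∧ W ω = w)
      (hprAW a w).ne').symm
  have hAMW : ∀ a m w, pr P (fun ω => A ω = a ∧ M ω = m ∧ W ω = w)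
      = pM P W A M m a w * (gg P W A a w * pr P (fun ω => W ω = w)) := by
    intro a m w
    rw [hgg a w,
      pr_congr' P (S := fun ω => A ω = a ∧ M ω = m ∧ W ω = w)
        (T := fun ω => M ω = m ∧ (A ω = a ∧ W ω = w)) (fun ω => by tauto)]
    exact (cpr_mul P (fun ω => M ω = m) (fun ω => A ω = a ∧ W ω = w)
      (hprAW a w).ne').symm
  -- conditional pmfs sum to one
  have hq1 : ∀ a w, ∑ z, qq P W A Z z a w = 1 := by
    intro a w
    unfold qq cpr
    rw [← Finset.sum_div, div_eq_one_iff_eq (hprAW a w).ne']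
    unfold pr
    rw [Finset.sum_comm]
    refine Finset.sum_congr rfl fun ω _ => ?_
    by_cases hc : A ω = a ∧ W ω = w <;> simp [hc]
  have hm1 : ∀ a w, ∑ m, pM P W A M m a w = 1 := by
    intro a w
    unfold pM cpr
    rw [← Finset.sum_div, div_eq_one_iff_eq (hprAW a w).ne']
    unfold pr
    rw [Finset.sum_comm]
    refine Finset.sum_congr rfl fun ω _ => ?_
    by_cases hc : A ω = a ∧ W ω = w <;> simp [hc]
  -- conditional-mean identity
  have hEY : ∀ z m w,
      prf (fun ω => P ω * Y ω)
          (fun ω => A ω = a' ∧ Z ω = z ∧ M ω = m ∧ W ω = w)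
        = bb P W A Z M Y a' z m w *
          pr P (fun ω => A ω = a' ∧ Z ω = z ∧ M ω = m ∧ W ω = w) := by
    intro z m w
    exact (cex_mul P Y _ (hprE4 a' z m w).ne').symm
  -- expand the integrand into five pieces
  have expand :
      ∑ ω, P ω * Dfun P W A Z M Y a' astar ω
        = (∑ ω, (if A ω = a' then P ω * Y ω else 0) *
              (cc P W A Z M astar a' (Z ω) (M ω) (W ω) / gg P W A a' (W ω)))
        - (∑ ω, (if A ω = a' then P ω else 0) *
              (cc P W A Z M astar a' (Z ω) (M ω) (W ω) / gg P W A a' (W ω) *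
                bb P W A Z M Y a' (Z ω) (M ω) (W ω)))
        + (∑ ω, (if A ω = a' then P ω else 0) *
              ((uu P W A Z M Y astar (Z ω) a' (W ω) -
                  ∑ z, uu P W A Z M Y astar z a' (W ω) * qq P W A Z z a' (W ω)) /
                gg P W A a' (W ω)))
        + (∑ ω, (if A ω = astar then P ω else 0) *
              (((∑ z, bb P W A Z M Y a' z (M ω) (W ω) * qq P W A Z z a' (W ω)) -
                  vv P W A Z M Y a' astar (W ω)) / gg P W A astar (W ω)))
        + (∑ ω, P ω * vv P W A Z M Y a' astar (W ω)) := by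
    rw [← Finset.sum_sub_distrib, ← Finset.sum_add_distrib,
      ← Finset.sum_add_distrib, ← Finset.sum_add_distrib]
    refine Finset.sum_congr rfl fun ω _ => ?_
    unfold Dfun
    by_cases h1 : A ω = a' <;> by_cases h2 : A ω = astar
    · simp only [if_pos h1, if_pos h2]; ring
    · simp only [if_pos h1, if_neg h2]; ring
    · simp only [if_neg h1, if_pos h2]; ring
    · simp only [if_neg h1, if_neg h2]; ring
  rw [expand]
  -- piece 1: the residual term vanishes (the two sums agree)
  have z1 :
      (∑ ω, (if A ω = a' then P ω * Y ω else 0) *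
          (cc P W A Z M astar a' (Z ω) (M ω) (W ω) / gg P W A a' (W ω)))
      = (∑ ω, (if A ω = a' then P ω else 0) *
          (cc P W A Z M astar a' (Z ω) (M ω) (W ω) / gg P W A a' (W ω) *
            bb P W A Z M Y a' (Z ω) (M ω) (W ω))) := by
    have ha := fiber3 A a' Z M W (fun ω => P ω * Y ω)
      (fun z m w => cc P W A Z M astar a' z m w / gg P W A a' w)
    have hb' := fiber3 A a' Z M W P
      (fun z m w => cc P W A Z M astar a' z m w / gg P W A a' w *
        bb P W A Z M Y a' z m w)
    rw [ha, hb']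
    simp_rw [hEY, prf_eq_pr]
    refine Finset.sum_congr rfl fun z _ => Finset.sum_congr rfl fun m _ =>
      Finset.sum_congr rfl fun w _ => by ring
  rw [z1, sub_self, zero_add]
  -- piece 2 vanishes
  have z2 :
      (∑ ω, (if A ω = a' then P ω else 0) *
          ((uu P W A Z M Y astar (Z ω) a' (W ω) -
              ∑ z, uu P W A Z M Y astar z a' (W ω) * qq P W A Z z a' (W ω)) /
            gg P W A a' (W ω))) = 0 := by
    have ha := fiber2 A a' Z W P
      (fun z w => (uu P W A Z M Y astar z a' w -
          ∑ z', uu P W A Z M Y astar z' a' w * qq P W A Z z' a' w) /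
        gg P W A a' w)
    rw [ha]
    simp_rw [prf_eq_pr]
    rw [Finset.sum_comm]
    refine Finset.sum_eq_zero fun w _ => ?_
    have hgne : gg P W A a' w ≠ 0 := (hggpos a' w).ne'
    have step : ∀ z : 𝒵,
        (uu P W A Z M Y astar z a' w -
            ∑ z', uu P W A Z M Y astar z' a' w * qq P W A Z z' a' w) /
          gg P W A a' w *
          pr P (fun ω => A ω = a' ∧ Z ω = z ∧ W ω = w)
        = (uu P W A Z M Y astar z a' w -
            ∑ z', uu P W A Z M Y astar z' a' w * qq P W A Z z' a' w) *
          qq P W A Z z a' w * pr P (fun ω => W ω = w) := by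
      intro z
      rw [hAZW]
      field_simp
    simp_rw [step, sub_mul, Finset.sum_sub_distrib]
    rw [← Finset.sum_mul, ← Finset.sum_mul, ← Finset.mul_sum, hq1, mul_one, sub_self]
  rw [z2, zero_add]
  -- piece 3 vanishes
  have z3 :
      (∑ ω, (if A ω = astar then P ω else 0) *
          (((∑ z, bb P W A Z M Y a' z (M ω) (W ω) * qq P W A Z z a' (W ω)) -
              vv P W A Z M Y a' astar (W ω)) / gg P W A astar (W ω))) = 0 := by
    have ha := fiber2 A astar M W P
      (fun m w => ((∑ z, bb P W A Z M Y a' z m w * qq P W A Z z a' w) -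
          vv P W A Z M Y a' astar w) / gg P W A astar w)
    rw [ha]
    simp_rw [prf_eq_pr]
    rw [Finset.sum_comm]
    refine Finset.sum_eq_zero fun w _ => ?_
    have hgne : gg P W A astar w ≠ 0 := (hggpos astar w).ne'
    have step : ∀ m : ℳ,
        ((∑ z, bb P W A Z M Y a' z m w * qq P W A Z z a' w) -
            vv P W A Z M Y a' astar w) / gg P W A astar w *
          pr P (fun ω => A ω = astar ∧ M ω = m ∧ W ω = w)
        = ((∑ z, bb P W A Z M Y a' z m w * qq P W A Z z a' w) -
            vv P W A Z M Y a' astar w) *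
          pM P W A M m astar w * pr P (fun ω => W ω = w) := by
      intro m
      rw [hAMW]
      field_simp
    simp_rw [step, sub_mul, Finset.sum_sub_distrib]
    have hvv : (∑ m, (∑ z, bb P W A Z M Y a' z m w * qq P W A Z z a' w) *
        pM P W A M m astar w) = vv P W A Z M Y a' astar w := by
      unfold vv
      exact Finset.sum_congr rfl fun m _ => by rw [Finset.sum_mul]
    rw [← Finset.sum_mul, ← Finset.sum_mul, ← Finset.mul_sum, hm1, mul_one, hvv, sub_self]
  rw [z3, zero_add]
  -- piece 4 equals θ
  have ha := fiber1 W P (fun w => vv P W A Z M Y a' astar w)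
  rw [ha]
  simp_rw [prf_eq_pr]
  unfold θparam vv
  refine Finset.sum_congr rfl fun w _ => ?_
  rw [Finset.sum_mul, Finset.sum_comm]
  exact Finset.sum_congr rfl fun z _ => by rw [Finset.sum_mul]
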